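/- Let L be a symmetric n×n interaction matrix with zero diagonal satisfying the Dobrushin-like condition ‖|L|‖_2 < 1, where |L| is the entrywise absolute value. Let a ∈ (ℝ^+)^n and let f : Ω → ℝ be a-Lipschitz, i.e., |f(x)−f(y)| ≤ Σ_i a_i 1{x^i≠y^i}. Then for any other symmetric zero-diagonal interaction matrix M, |E_{π_L} f − E_{π_M} f| ≤ (‖a‖_2 √n / (2(1−‖|L|‖_2))) · ‖L − M‖_2. -/

import Mathlib

open Finset
open scoped Matrix

/-- Spin value ±1 of a Boolean coordinate. -/
noncomputable def spin (b : Bool) : ℝ := if b then 1 else -1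

/-- Configuration `x` with coordinate `i` set to `+1`. -/
noncomputable def up {n : ℕ} (x : Fin n → Bool) (i : Fin n) : Fin n → Bool :=
  Function.update x i true

/-- Configuration `x` with coordinate `i` set to `-1`. -/
noncomputable def dn {n : ℕ} (x : Fin n → Bool) (i : Fin n) : Fin n → Bool :=
  Function.update x i false

/-- Conditional probability `μ_i(1 | x^{(∼i)})`. -/
noncomputable def condProb {n : ℕ} (μ : (Fin n → Bool) → ℝ) (x : Fin n → Bool) (i : Fin n) : ℝ :=
  μ (up x i) / (μ (up x i) + μ (dn x i))

/-- Glauber dynamics kernel of `μ`, acting on functions. -/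
noncomputable def glauberOp {n : ℕ} (μ : (Fin n → Bool) → ℝ) (h : (Fin n → Bool) → ℝ)
    (x : Fin n → Bool) : ℝ :=
  (1 / n) * ∑ i, (condProb μ x i * h (up x i) + (1 - condProb μ x i) * h (dn x i))

/-- Discrete derivative `Δ_i(h)(x) = h(x^{(i,+)}) - h(x^{(i,-)})`. -/
noncomputable def disc {n : ℕ} (i : Fin n) (h : (Fin n → Bool) → ℝ) (x : Fin n → Bool) : ℝ :=
  h (up x i) - h (dn x i)

/-- The ±1 spin vector associated to a Boolean configuration. -/
noncomputable def sigmaVec {n : ℕ} (x : Fin n → Bool) : Fin n → ℝ := fun i => spin (x i)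

/-- The Ising model with interaction matrix `J`: `π_J(x) ∝ exp((1/2) xᵀ J x)`. -/
noncomputable def ising {n : ℕ} (J : Matrix (Fin n) (Fin n) ℝ) (x : Fin n → Bool) : ℝ :=
  Real.exp ((1 / 2) * (sigmaVec x ⬝ᵥ J.mulVec (sigmaVec x))) /
    ∑ y, Real.exp ((1 / 2) * (sigmaVec y ⬝ᵥ J.mulVec (sigmaVec y)))

/-- Spectral (ℓ²-operator) norm of a real square matrix. -/
noncomputable def specNorm {n : ℕ} (M : Matrix (Fin n) (Fin n) ℝ) : ℝ :=
  ‖(Matrix.toEuclideanCLM (𝕜 := ℝ) M : EuclideanSpace ℝ (Fin n) →L[ℝ] EuclideanSpace ℝ (Fin n))‖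

/-- Expectation of `f` under the probability mass function `μ`. -/
noncomputable def expect {n : ℕ} (μ : (Fin n → Bool) → ℝ) (f : (Fin n → Bool) → ℝ) : ℝ :=
  ∑ x, μ x * f x

/-- Entrywise absolute value of a matrix. -/
noncomputable def absMat {n : ℕ} (L : Matrix (Fin n) (Fin n) ℝ) : Matrix (Fin n) (Fin n) ℝ :=
  Matrix.of fun i j => |L i j|

section basics
variable {n : ℕ}

lemma up_up (x : Fin n → Bool) (i : Fin n) : up (up x i) i = up x i := Function.update_idem _ _ _
lemma dn_up (x : Fin n → Bool) (i : Fin n) : dn (up x i) i = dn x i := Function.update_idem _ _ _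
lemma up_dn (x : Fin n → Bool) (i : Fin n) : up (dn x i) i = up x i := Function.update_idem _ _ _
lemma dn_dn (x : Fin n → Bool) (i : Fin n) : dn (dn x i) i = dn x i := Function.update_idem _ _ _

lemma up_comm (x : Fin n → Bool) {i j : Fin n} (h : i ≠ j) : up (up x i) j = up (up x j) i :=
  Function.update_comm h _ _ _
lemma dn_up_comm (x : Fin n → Bool) {i j : Fin n} (h : i ≠ j) : dn (up x i) j = up (dn x j) i :=
  Function.update_comm h _ _ _
lemma up_dn_comm (x : Fin n → Bool) {i j : Fin n} (h : i ≠ j) : up (dn x i) j = dn (up x j) i :=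
  Function.update_comm h _ _ _
lemma dn_dn_comm (x : Fin n → Bool) {i j : Fin n} (h : i ≠ j) : dn (dn x i) j = dn (dn x j) i :=
  Function.update_comm h _ _ _

lemma condProb_up (μ : (Fin n → Bool) → ℝ) (x : Fin n → Bool) (i : Fin n) :
    condProb μ (up x i) i = condProb μ x i := by
  simp [condProb, up_up, dn_up]
lemma condProb_dn (μ : (Fin n → Bool) → ℝ) (x : Fin n → Bool) (i : Fin n) :
    condProb μ (dn x i) i = condProb μ x i := by
  simp [condProb, up_dn, dn_dn]

lemma ising_pos {J : Matrix (Fin n) (Fin n) ℝ} (x : Fin n → Bool) : 0 < ising J x := by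
  apply div_pos (Real.exp_pos _)
  exact Finset.sum_pos (fun y _ => Real.exp_pos _) ⟨x, mem_univ x⟩

lemma ising_sum (J : Matrix (Fin n) (Fin n) ℝ) : ∑ x, ising J x = 1 := by
  have h : (0:ℝ) < ∑ y, Real.exp ((1 / 2) * (sigmaVec y ⬝ᵥ J.mulVec (sigmaVec y))) :=
    Finset.sum_pos (fun y _ => Real.exp_pos _) univ_nonempty
  simp only [ising]
  rw [← Finset.sum_div, div_self h.ne']

lemma condProb_mem (μ : (Fin n → Bool) → ℝ) (hμ : ∀ x, 0 < μ x) (x : Fin n → Bool) (i : Fin n) :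
    0 ≤ condProb μ x i ∧ condProb μ x i ≤ 1 := by
  have h1 := hμ (up x i); have h2 := hμ (dn x i)
  constructor
  · exact div_nonneg h1.le (by linarith)
  · rw [condProb, div_le_one (by linarith)]; linarith

end basics

section phi

/-- logistic-type function -/
noncomputable def phi (t : ℝ) : ℝ := Real.exp t / (Real.exp t + Real.exp (-t))

lemma phi_eq (t : ℝ) : phi t = 1 - (1 + Real.exp (2*t))⁻¹ := by
  have h1 : Real.exp t + Real.exp (-t) > 0 := by positivity
  have h2 : (1:ℝ) + Real.exp (2*t) > 0 := by positivity
  have key : Real.exp t * (1 + Real.exp (2*t)) = Real.exp (2*t) * (Real.exp t + Real.exp (-t)) := by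
    rw [mul_add, mul_add, ← Real.exp_add, ← Real.exp_add, ← Real.exp_add]; ring_nf
  have h3 : 1 - (1 + Real.exp (2*t))⁻¹ = Real.exp (2*t) / (1 + Real.exp (2*t)) := by
    field_simp
    ring
  rw [phi, h3, div_eq_div_iff h1.ne' h2.ne']
  linarith [key]

lemma phi_hasDeriv (t : ℝ) :
    HasDerivAt phi (2 * Real.exp (2*t) / (1 + Real.exp (2*t))^2) t := by
  have h2 : (1:ℝ) + Real.exp (2*t) > 0 := by positivity
  have d1 : HasDerivAt (fun s : ℝ => 2*s) 2 t := by
    simpa using (hasDerivAt_id t).const_mul (2:ℝ)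
  have d2 : HasDerivAt (fun s : ℝ => Real.exp (2*s)) (Real.exp (2*t) * 2) t := d1.exp
  have d3 : HasDerivAt (fun s : ℝ => 1 + Real.exp (2*s)) (Real.exp (2*t) * 2) t :=
    d2.const_add 1
  have d4 : HasDerivAt (fun s : ℝ => (1 + Real.exp (2*s))⁻¹)
      (-(Real.exp (2*t) * 2) / (1 + Real.exp (2*t))^2) t := d3.inv h2.ne'
  have d5 := d4.const_sub 1
  rw [show phi = fun s => 1 - (1 + Real.exp (2*s))⁻¹ from funext phi_eq]
  refine d5.congr_deriv ?_
  ring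

lemma phi_lip (s t : ℝ) : |phi s - phi t| ≤ (1/2) * |s - t| := by
  have hdiff : Differentiable ℝ phi := fun x => (phi_hasDeriv x).differentiableAt
  have hb : ∀ x : ℝ, ‖deriv phi x‖₊ ≤ (1/2 : NNReal) := by
    intro x
    have hd := (phi_hasDeriv x).deriv
    rw [← NNReal.coe_le_coe, coe_nnnorm, hd, Real.norm_eq_abs]
    have h2 : (0:ℝ) < Real.exp (2*x) := Real.exp_pos _
    rw [abs_of_nonneg (by positivity)]
    rw [div_le_iff₀ (by positivity)]
    push_cast
    nlinarith [sq_nonneg (1 - Real.exp (2*x))]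
  have := lipschitzWith_of_nnnorm_deriv_le hdiff hb
  have h := this.dist_le_mul s t
  rw [Real.dist_eq, Real.dist_eq] at h
  simpa using h

end phi

section condprob
variable {n : ℕ}

lemma sigma_up (x : Fin n → Bool) (i : Fin n) :
    sigmaVec (up x i) = Function.update (sigmaVec x) i 1 := by
  funext j
  by_cases hj : j = i
  · subst hj; simp [sigmaVec, up, spin]
  · simp [sigmaVec, up, Function.update_apply, hj]

lemma sigma_dn (x : Fin n → Bool) (i : Fin n) :
    sigmaVec (dn x i) = Function.update (sigmaVec x) i (-1) := by
  funext j
  by_cases hj : j = i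
  · subst hj; simp [sigmaVec, dn, spin]
  · simp [sigmaVec, dn, Function.update_apply, hj]

lemma update_eq_add_single (s : Fin n → ℝ) (i : Fin n) (c : ℝ) :
    Function.update s i c = s + (c - s i) • (Pi.single i 1 : Fin n → ℝ) := by
  funext j
  by_cases hj : j = i
  · subst hj; simp
  · simp [Function.update_apply, hj, Pi.single_apply]

lemma quad_expand (J : Matrix (Fin n) (Fin n) ℝ) (hs : J.IsSymm) (hd : ∀ i, J i i = 0)
    (s : Fin n → ℝ) (i : Fin n) (c : ℝ) :
    (s + c • (Pi.single i 1 : Fin n → ℝ)) ⬝ᵥ J.mulVec (s + c • (Pi.single i 1 : Fin n → ℝ))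
      = s ⬝ᵥ J.mulVec s + 2 * c * (J.mulVec s i) := by
  rw [Matrix.mulVec_add, Matrix.mulVec_smul, dotProduct_add, add_dotProduct,
    add_dotProduct, dotProduct_smul, smul_dotProduct,
    smul_dotProduct, dotProduct_smul]
  have h1 : Pi.single i (1:ℝ) ⬝ᵥ J.mulVec s = J.mulVec s i := by
    rw [single_dotProduct, one_mul]
  have h2 : s ⬝ᵥ J.mulVec (Pi.single i 1) = J.mulVec s i := by
    rw [Matrix.mulVec_single_one]
    simp only [dotProduct, Matrix.mulVec, Matrix.col_apply, mul_one]
    refine Finset.sum_congr rfl fun j _ => ?_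
    rw [← hs.apply i j]; ring
  have h3 : Pi.single i (1:ℝ) ⬝ᵥ J.mulVec (Pi.single i 1) = 0 := by
    rw [Matrix.mulVec_single_one, single_dotProduct]
    simp [hd i]
  rw [h1, h2, h3]
  simp only [smul_eq_mul]
  ring

lemma energy_up_sub_dn (J : Matrix (Fin n) (Fin n) ℝ) (hs : J.IsSymm) (hd : ∀ i, J i i = 0)
    (x : Fin n → Bool) (i : Fin n) :
    sigmaVec (up x i) ⬝ᵥ J.mulVec (sigmaVec (up x i))
      - sigmaVec (dn x i) ⬝ᵥ J.mulVec (sigmaVec (dn x i))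
      = 4 * (J.mulVec (sigmaVec x) i) := by
  rw [sigma_up, sigma_dn, update_eq_add_single, update_eq_add_single,
    quad_expand J hs hd, quad_expand J hs hd]
  ring

lemma condProb_ising (J : Matrix (Fin n) (Fin n) ℝ) (hs : J.IsSymm) (hd : ∀ i, J i i = 0)
    (x : Fin n → Bool) (i : Fin n) :
    condProb (ising J) x i = phi (J.mulVec (sigmaVec x) i) := by
  have hZ : (0:ℝ) < ∑ y, Real.exp ((1 / 2) * (sigmaVec y ⬝ᵥ J.mulVec (sigmaVec y))) :=
    Finset.sum_pos (fun y _ => Real.exp_pos _) Finset.univ_nonempty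
  obtain ⟨m, Hu, Hd, hm, hHu, hHd⟩ : ∃ m Hu Hd : ℝ, m = J.mulVec (sigmaVec x) i ∧
      Hu = (1 / 2) * (sigmaVec (up x i) ⬝ᵥ J.mulVec (sigmaVec (up x i))) ∧
      Hd = (1 / 2) * (sigmaVec (dn x i) ⬝ᵥ J.mulVec (sigmaVec (dn x i))) :=
    ⟨_, _, _, rfl, rfl, rfl⟩
  have hud : Hu = Hd + 2 * m := by
    have := energy_up_sub_dn J hs hd x i
    rw [hHu, hHd, hm]; linarith
  have step1 : condProb (ising J) x i = Real.exp Hu / (Real.exp Hu + Real.exp Hd) := by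
    rw [condProb, ising, ising, ← add_div, div_div_div_cancel_right₀ hZ.ne', hHu, hHd]
  rw [step1, phi, ← hm]
  have hpos1 : (0:ℝ) < Real.exp Hu + Real.exp Hd := by positivity
  have hpos2 : (0:ℝ) < Real.exp m + Real.exp (-m) := by positivity
  rw [div_eq_div_iff hpos1.ne' hpos2.ne']
  have key : Hu + -m = m + Hd := by linarith
  rw [mul_add, mul_add, ← Real.exp_add, ← Real.exp_add, ← Real.exp_add, ← Real.exp_add, key]
  ring_nf

lemma condProb_diff_mat (L M : Matrix (Fin n) (Fin n) ℝ)
    (hLs : L.IsSymm) (hLd : ∀ i, L i i = 0) (hMs : M.IsSymm) (hMd : ∀ i, M i i = 0)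
    (x : Fin n → Bool) (i : Fin n) :
    |condProb (ising L) x i - condProb (ising M) x i|
      ≤ (1/2) * |(L - M).mulVec (sigmaVec x) i| := by
  rw [condProb_ising L hLs hLd, condProb_ising M hMs hMd]
  refine le_trans (phi_lip _ _) ?_
  rw [Matrix.sub_mulVec]
  simp

lemma condProb_flip (J : Matrix (Fin n) (Fin n) ℝ) (hs : J.IsSymm) (hd : ∀ i, J i i = 0)
    (x : Fin n → Bool) {i j : Fin n} (hij : i ≠ j) :
    |condProb (ising J) (up x j) i - condProb (ising J) (dn x j) i| ≤ |J i j| := by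
  rw [condProb_ising J hs hd, condProb_ising J hs hd]
  refine le_trans (phi_lip _ _) ?_
  have hdiff : J.mulVec (sigmaVec (up x j)) i - J.mulVec (sigmaVec (dn x j)) i = 2 * J i j := by
    rw [sigma_up, sigma_dn, update_eq_add_single, update_eq_add_single,
      Matrix.mulVec_add, Matrix.mulVec_add, Matrix.mulVec_smul, Matrix.mulVec_smul,
      Matrix.mulVec_single_one]
    simp only [Pi.add_apply, Pi.smul_apply, smul_eq_mul, Matrix.col_apply, mul_one]
    ring
  rw [hdiff, abs_mul, abs_two]
  have := abs_nonneg (J i j)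
  linarith

end condprob

section stationary
variable {n : ℕ}

lemma flip_involutive (i : Fin n) :
    Function.Involutive (fun x : Fin n → Bool => Function.update x i (!(x i))) := by
  intro x
  funext j
  by_cases hj : j = i
  · subst hj; simp
  · simp [Function.update_apply, hj]

lemma sum_up_add_dn (i : Fin n) (G : (Fin n → Bool) → ℝ) :
    (∑ x, G (up x i)) + (∑ x, G (dn x i)) = 2 * ∑ x, G x := by
  have key : ∀ x : Fin n → Bool,
      G (up x i) + G (dn x i) = G x + G (Function.update x i (!(x i))) := by
    intro x
    by_cases hx : x i
    · have h1 : up x i = x := by rw [up, ← hx, Function.update_eq_self]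
      have h2 : Function.update x i (!(x i)) = dn x i := by rw [dn, hx]; rfl
      rw [h1, h2]
    · have hx' : x i = false := by simpa using hx
      have h1 : dn x i = x := by rw [dn, ← hx', Function.update_eq_self]
      have h2 : Function.update x i (!(x i)) = up x i := by rw [up, hx']; rfl
      rw [h1, h2]; ring
  rw [← Finset.sum_add_distrib]
  rw [Finset.sum_congr rfl (fun x _ => key x), Finset.sum_add_distrib]
  have hb := (flip_involutive i).bijective
  rw [Function.Bijective.sum_comp hb G]
  ring

lemma stationary (hn : 0 < n) (μ : (Fin n → Bool) → ℝ) (hμ : ∀ x, 0 < μ x)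
    (h : (Fin n → Bool) → ℝ) : expect μ (glauberOp μ h) = expect μ h := by
  have main : ∀ i : Fin n,
      (∑ x, μ x * (condProb μ x i * h (up x i) + (1 - condProb μ x i) * h (dn x i)))
        = ∑ x, μ x * h x := by
    intro i
    set K : (Fin n → Bool) → ℝ :=
      fun x => condProb μ x i * h (up x i) + (1 - condProb μ x i) * h (dn x i) with hK
    have hKup : ∀ x, K (up x i) = K x := by
      intro x; simp only [hK, condProb_up, up_up, dn_up]
    have hKdn : ∀ x, K (dn x i) = K x := by
      intro x; simp only [hK, condProb_dn, up_dn, dn_dn]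
    have pair1 := sum_up_add_dn i (fun y => μ y * K y)
    have pair2 := sum_up_add_dn i (fun y => μ y * h y)
    have ptwise : ∀ x : Fin n → Bool,
        μ (up x i) * K (up x i) + μ (dn x i) * K (dn x i)
          = μ (up x i) * h (up x i) + μ (dn x i) * h (dn x i) := by
      intro x
      rw [hKup, hKdn, hK]
      have hpos : 0 < μ (up x i) + μ (dn x i) := by
        have := hμ (up x i); have := hμ (dn x i); linarith
      have hp : (μ (up x i) + μ (dn x i)) * condProb μ x i = μ (up x i) := by
        rw [condProb, mul_div_cancel₀ _ hpos.ne']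
      have hq : (μ (up x i) + μ (dn x i)) * (1 - condProb μ x i) = μ (dn x i) := by
        rw [mul_sub, hp, mul_one]; ring
      calc μ (up x i) * (condProb μ x i * h (up x i) + (1 - condProb μ x i) * h (dn x i))
            + μ (dn x i) * (condProb μ x i * h (up x i) + (1 - condProb μ x i) * h (dn x i))
          = ((μ (up x i) + μ (dn x i)) * condProb μ x i) * h (up x i)
            + ((μ (up x i) + μ (dn x i)) * (1 - condProb μ x i)) * h (dn x i) := by ring
        _ = μ (up x i) * h (up x i) + μ (dn x i) * h (dn x i) := by rw [hp, hq]
    have sums_eq : (∑ x, μ (up x i) * K (up x i)) + (∑ x, μ (dn x i) * K (dn x i))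
        = (∑ x, μ (up x i) * h (up x i)) + (∑ x, μ (dn x i) * h (dn x i)) := by
      rw [← Finset.sum_add_distrib, ← Finset.sum_add_distrib]
      exact Finset.sum_congr rfl fun x _ => ptwise x
    have : 2 * (∑ x, μ x * K x) = 2 * ∑ x, μ x * h x := by
      rw [← pair1, ← pair2]; exact sums_eq
    linarith
  show (∑ x, μ x * glauberOp μ h x) = ∑ x, μ x * h x
  simp only [glauberOp]
  have swap : ∑ x, μ x * ((1 / (n:ℝ)) * ∑ i, (condProb μ x i * h (up x i)
      + (1 - condProb μ x i) * h (dn x i)))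
      = (1 / (n:ℝ)) * ∑ i, ∑ x, μ x * (condProb μ x i * h (up x i)
      + (1 - condProb μ x i) * h (dn x i)) := by
    have hx : ∀ x, μ x * ((1 / (n:ℝ)) * ∑ i, (condProb μ x i * h (up x i)
        + (1 - condProb μ x i) * h (dn x i)))
        = ∑ i, (1 / (n:ℝ)) * (μ x * (condProb μ x i * h (up x i)
        + (1 - condProb μ x i) * h (dn x i))) := by
      intro x
      rw [Finset.mul_sum, Finset.mul_sum]
      exact Finset.sum_congr rfl fun i _ => by ring
    rw [Finset.sum_congr rfl fun x _ => hx x, Finset.sum_comm]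
    conv_rhs => rw [Finset.mul_sum]
    exact Finset.sum_congr rfl fun i _ => (Finset.mul_sum _ _ _).symm
  rw [swap]
  rw [Finset.sum_congr rfl (fun i _ => main i)]
  rw [Finset.sum_const, card_univ, Fintype.card_fin, nsmul_eq_mul]
  have hn' : (n:ℝ) ≠ 0 := Nat.cast_ne_zero.mpr hn.ne'
  field_simp

end stationary

section vsem
variable {n : ℕ}

/-- sup of the discrete derivative -/
noncomputable def Vd {n : ℕ} (h : (Fin n → Bool) → ℝ) (i : Fin n) : ℝ :=
  Finset.univ.sup' Finset.univ_nonempty fun x => |disc i h x|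

lemma abs_disc_le_Vd (h : (Fin n → Bool) → ℝ) (i : Fin n) (x : Fin n → Bool) :
    |disc i h x| ≤ Vd h i :=
  Finset.le_sup' (fun x => |disc i h x|) (mem_univ x)

lemma Vd_nonneg (h : (Fin n → Bool) → ℝ) (i : Fin n) : 0 ≤ Vd h i :=
  le_trans (abs_nonneg _) (abs_disc_le_Vd h i (fun _ => true))

lemma Vd_le (h : (Fin n → Bool) → ℝ) (i : Fin n) {c : ℝ}
    (hc : ∀ x, |disc i h x| ≤ c) : Vd h i ≤ c :=
  Finset.sup'_le _ _ fun x _ => hc x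

lemma osc_le_aux (h : (Fin n → Bool) → ℝ) (s : Finset (Fin n)) :
    ∀ x y : Fin n → Bool, (∀ i, i ∉ s → x i = y i) → |h x - h y| ≤ ∑ i ∈ s, Vd h i := by
  induction s using Finset.induction_on with
  | empty =>
    intro x y hxy
    have : x = y := funext fun i => hxy i (by simp)
    simp [this]
  | insert i s hi IH =>
    intro x y hxy
    set x' := Function.update x i (y i) with hx'
    have step1 : |h x - h x'| ≤ Vd h i := by
      by_cases hxi : x i = y i
      · have : x' = x := by rw [hx', ← hxi, Function.update_eq_self]
        rw [this]; simpa using Vd_nonneg h i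
      · rcases Bool.eq_false_or_eq_true (x i) with hx1 | hx1
        · -- x i = true, y i = false
          have hy1 : y i = false := by
            cases hyi : y i
            · rfl
            · exact absurd (hx1.trans hyi.symm) hxi
          have e1 : x' = dn x i := by rw [hx', hy1, dn]
          have e2 : up x i = x := by rw [up, ← hx1, Function.update_eq_self]
          have e3 : h x - h x' = disc i h x := by rw [disc, e1, e2]
          rw [e3]
          exact abs_disc_le_Vd h i x
        · -- x i = false, y i = true
          have hy1 : y i = true := by
            cases hyi : y i
            · exact absurd (hx1.trans hyi.symm) hxi
            · rfl
          have e1 : x' = up x i := by rw [hx', hy1, up]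
          have e2 : dn x i = x := by rw [dn, ← hx1, Function.update_eq_self]
          have e3 : h x' - h x = disc i h x := by rw [disc, e1, e2]
          rw [abs_sub_comm, e3]
          exact abs_disc_le_Vd h i x
    have step2 : |h x' - h y| ≤ ∑ j ∈ s, Vd h j := by
      apply IH
      intro j hj
      by_cases hji : j = i
      · subst hji; simp [hx']
      · rw [hx', Function.update_apply, if_neg hji]
        exact hxy j (by simp [hj, hji])
    calc |h x - h y| ≤ |h x - h x'| + |h x' - h y| := abs_sub_le _ _ _
      _ ≤ Vd h i + ∑ j ∈ s, Vd h j := add_le_add step1 step2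
      _ = ∑ j ∈ insert i s, Vd h j := (Finset.sum_insert hi).symm

lemma osc_le (h : (Fin n → Bool) → ℝ) (x y : Fin n → Bool) :
    |h x - h y| ≤ ∑ i, Vd h i :=
  osc_le_aux h Finset.univ x y (fun i hi => absurd (mem_univ i) hi)

end vsem

section norms
variable {n : ℕ}

noncomputable def eN {n : ℕ} (v : Fin n → ℝ) : ℝ := ‖(WithLp.equiv 2 (Fin n → ℝ)).symm v‖

lemma eN_eq (v : Fin n → ℝ) : eN v = Real.sqrt (∑ i, v i ^ 2) := by
  rw [eN, EuclideanSpace.norm_eq]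
  congr 1
  exact Finset.sum_congr rfl fun i _ => by
    rw [WithLp.equiv_symm_apply, PiLp.toLp_apply, Real.norm_eq_abs, sq_abs]

lemma eN_nonneg (v : Fin n → ℝ) : 0 ≤ eN v := norm_nonneg _

lemma eN_mulVec_le (M : Matrix (Fin n) (Fin n) ℝ) (v : Fin n → ℝ) :
    eN (M.mulVec v) ≤ specNorm M * eN v := by
  have h := (Matrix.toEuclideanCLM (𝕜 := ℝ) M).le_opNorm ((WithLp.equiv 2 (Fin n → ℝ)).symm v)
  rwa [WithLp.equiv_symm_apply, Matrix.toEuclideanCLM_toLp] at h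

lemma eN_mono {u w : Fin n → ℝ} (hu : ∀ i, 0 ≤ u i) (huw : ∀ i, u i ≤ w i) : eN u ≤ eN w := by
  rw [eN_eq, eN_eq]
  apply Real.sqrt_le_sqrt
  exact Finset.sum_le_sum fun i _ => pow_le_pow_left₀ (hu i) (huw i) 2

lemma eN_comb (c d : ℝ) (hc : 0 ≤ c) (hd : 0 ≤ d) (u w : Fin n → ℝ) :
    eN (fun i => c * u i + d * w i) ≤ c * eN u + d * eN w := by
  have : (fun i => c * u i + d * w i) = c • u + d • w := by
    funext i; simp [smul_eq_mul]
  rw [eN, this, WithLp.equiv_symm_apply, WithLp.toLp_add, WithLp.toLp_smul, WithLp.toLp_smul]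
  refine le_trans (norm_add_le _ _) ?_
  rw [norm_smul, norm_smul, Real.norm_eq_abs, Real.norm_eq_abs, abs_of_nonneg hc, abs_of_nonneg hd]
  exact le_refl _

lemma cs_abs (u w : Fin n → ℝ) (hw : ∀ i, 0 ≤ w i) : ∑ i, |u i| * w i ≤ eN u * eN w := by
  have h := sum_mul_sq_le_sq_mul_sq Finset.univ (fun i => |u i|) w
  have hnn : 0 ≤ ∑ i, |u i| * w i :=
    Finset.sum_nonneg fun i _ => mul_nonneg (abs_nonneg _) (hw i)
  rw [eN_eq, eN_eq]
  have := Real.sqrt_le_sqrt h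
  rw [Real.sqrt_sq hnn, Real.sqrt_mul (by positivity)] at this
  refine le_trans this ?_
  apply mul_le_mul_of_nonneg_right _ (Real.sqrt_nonneg _)
  apply Real.sqrt_le_sqrt
  exact le_of_eq (Finset.sum_congr rfl fun i _ => by rw [sq_abs])

lemma eN_sigma (x : Fin n → Bool) : eN (sigmaVec x) = Real.sqrt n := by
  rw [eN_eq]
  congr 1
  have : ∀ i, sigmaVec x i ^ 2 = 1 := by
    intro i; rcases Bool.eq_false_or_eq_true (x i) with h | h <;> simp [sigmaVec, h, spin]
  rw [Finset.sum_congr rfl fun i _ => this i]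
  simp

lemma sum_le_sqrt_eN (w : Fin n → ℝ) (hw : ∀ i, 0 ≤ w i) :
    ∑ i, w i ≤ Real.sqrt n * eN w := by
  have h := cs_abs (fun _ => (1:ℝ)) w hw
  simp only [abs_one, one_mul] at h
  refine le_trans h ?_
  apply mul_le_mul_of_nonneg_right _ (eN_nonneg w)
  rw [eN_eq]
  simp

end norms

section contraction
variable {n : ℕ}

set_option maxHeartbeats 1000000 in
lemma Tdiff_bound (L : Matrix (Fin n) (Fin n) ℝ) (hs : L.IsSymm) (hd : ∀ i, L i i = 0)
    (h : (Fin n → Bool) → ℝ) (x : Fin n → Bool) {i j : Fin n} (hij : i ≠ j) :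
    |condProb (ising L) (up x i) j * h (up (up x i) j)
        + (1 - condProb (ising L) (up x i) j) * h (dn (up x i) j)
      - (condProb (ising L) (dn x i) j * h (up (dn x i) j)
        + (1 - condProb (ising L) (dn x i) j) * h (dn (dn x i) j))|
      ≤ Vd h i + |L i j| * Vd h j := by
  set p := condProb (ising L) (up x i) j with hp
  set q := condProb (ising L) (dn x i) j with hq
  have hmem := condProb_mem (ising L) (fun y => ising_pos y) (up x i) j
  have expand : p * h (up (up x i) j) + (1 - p) * h (dn (up x i) j)
      - (q * h (up (dn x i) j) + (1 - q) * h (dn (dn x i) j))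
      = p * (h (up (up x i) j) - h (up (dn x i) j))
        + (1 - p) * (h (dn (up x i) j) - h (dn (dn x i) j))
        + (p - q) * (h (up (dn x i) j) - h (dn (dn x i) j)) := by ring
  have r1 : h (up (up x i) j) - h (up (dn x i) j) = disc i h (up x j) := by
    rw [disc, up_comm x hij, up_dn_comm x hij]
  have r2 : h (dn (up x i) j) - h (dn (dn x i) j) = disc i h (dn x j) := by
    rw [disc, dn_up_comm x hij, dn_dn_comm x hij]
  have r3 : h (up (dn x i) j) - h (dn (dn x i) j) = disc j h (dn x i) := by
    rw [disc]
  have rpq : |p - q| ≤ |L i j| := by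
    rw [hp, hq]
    have h2 := condProb_flip L hs hd x (show j ≠ i from fun hh => hij hh.symm)
    refine le_trans h2 (le_of_eq ?_)
    rw [hs.apply i j]
  rw [expand, r1, r2, r3]
  calc |p * disc i h (up x j) + (1 - p) * disc i h (dn x j) + (p - q) * disc j h (dn x i)|
      ≤ |p * disc i h (up x j)| + |(1 - p) * disc i h (dn x j)| + |(p - q) * disc j h (dn x i)| :=
        abs_add_three _ _ _
    _ ≤ p * Vd h i + (1 - p) * Vd h i + |L i j| * Vd h j := by
        gcongr ?_ + ?_ + ?_
        · rw [abs_mul, abs_of_nonneg hmem.1]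
          exact mul_le_mul_of_nonneg_left (abs_disc_le_Vd h i (up x j)) hmem.1
        · rw [abs_mul, abs_of_nonneg (by linarith [hmem.2])]
          exact mul_le_mul_of_nonneg_left (abs_disc_le_Vd h i (dn x j)) (by linarith [hmem.2])
        · rw [abs_mul]
          exact mul_le_mul rpq (abs_disc_le_Vd h j (dn x i)) (abs_nonneg _)
            (abs_nonneg _)
    _ = Vd h i + |L i j| * Vd h j := by ring

set_option maxHeartbeats 1000000 in
lemma Vd_glauber_le (hn : 0 < n) (L : Matrix (Fin n) (Fin n) ℝ) (hs : L.IsSymm)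
    (hd : ∀ i, L i i = 0) (h : (Fin n → Bool) → ℝ) (i : Fin n) :
    Vd (glauberOp (ising L) h) i
      ≤ (1 - 1/(n:ℝ)) * Vd h i + (1/(n:ℝ)) * (absMat L).mulVec (Vd h) i := by
  apply Vd_le
  intro x
  set μ := ising L with hμ
  have hdisc : disc i (glauberOp μ h) x
      = (1/(n:ℝ)) * ∑ j, ((condProb μ (up x i) j * h (up (up x i) j)
        + (1 - condProb μ (up x i) j) * h (dn (up x i) j))
      - (condProb μ (dn x i) j * h (up (dn x i) j)
        + (1 - condProb μ (dn x i) j) * h (dn (dn x i) j))) := by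
    rw [disc, glauberOp, glauberOp, ← mul_sub, ← Finset.sum_sub_distrib]
  rw [hdisc, abs_mul, abs_of_nonneg (by positivity : (0:ℝ) ≤ 1/(n:ℝ))]
  have hterm : ∀ j, |(condProb μ (up x i) j * h (up (up x i) j)
        + (1 - condProb μ (up x i) j) * h (dn (up x i) j))
      - (condProb μ (dn x i) j * h (up (dn x i) j)
        + (1 - condProb μ (dn x i) j) * h (dn (dn x i) j))|
      ≤ (if j = i then 0 else Vd h i) + |L i j| * Vd h j := by
    intro j
    by_cases hji : j = i
    · subst hji
      rw [if_pos rfl, hd j, abs_zero, zero_mul, zero_add]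
      have e0 : (condProb μ (up x j) j * h (up (up x j) j)
          + (1 - condProb μ (up x j) j) * h (dn (up x j) j))
          - (condProb μ (dn x j) j * h (up (dn x j) j)
          + (1 - condProb μ (dn x j) j) * h (dn (dn x j) j)) = 0 := by
        rw [condProb_up, condProb_dn, up_up, dn_up, up_dn, dn_dn]
        ring
      rw [e0, abs_zero]
    · rw [if_neg hji]
      exact Tdiff_bound L hs hd h x (fun hh => hji hh.symm)
  have hsum : |∑ j, ((condProb μ (up x i) j * h (up (up x i) j)
        + (1 - condProb μ (up x i) j) * h (dn (up x i) j))
      - (condProb μ (dn x i) j * h (up (dn x i) j)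
        + (1 - condProb μ (dn x i) j) * h (dn (dn x i) j)))|
      ≤ ∑ j, ((if j = i then 0 else Vd h i) + |L i j| * Vd h j) :=
    le_trans (Finset.abs_sum_le_sum_abs _ _) (Finset.sum_le_sum fun j _ => hterm j)
  refine le_trans (mul_le_mul_of_nonneg_left hsum (by positivity)) ?_
  have hsplit : ∑ j, ((if j = i then 0 else Vd h i) + |L i j| * Vd h j)
      = ((n:ℝ) - 1) * Vd h i + (absMat L).mulVec (Vd h) i := by
    rw [Finset.sum_add_distrib]
    congr 1
    · have e1 : ∀ j : Fin n, (if j = i then (0:ℝ) else Vd h i)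
          = Vd h i - (if j = i then Vd h i else 0) := by
        intro j; by_cases hji : j = i <;> simp [hji]
      rw [Finset.sum_congr rfl fun j _ => e1 j, Finset.sum_sub_distrib,
        Finset.sum_ite_eq' Finset.univ i (fun _ => Vd h i), if_pos (Finset.mem_univ i),
        Finset.sum_const, card_univ, Fintype.card_fin, nsmul_eq_mul]
      ring
  rw [hsplit]
  have hn' : (0:ℝ) < (n:ℝ) := by exact_mod_cast hn
  have heq : (1/(n:ℝ)) * (((n:ℝ) - 1) * Vd h i + (absMat L).mulVec (Vd h) i)
      = (1 - 1/(n:ℝ)) * Vd h i + (1/(n:ℝ)) * (absMat L).mulVec (Vd h) i := by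
    field_simp
  rw [heq]

end contraction

section main
variable {n : ℕ}

lemma specNorm_sub_comm (L M : Matrix (Fin n) (Fin n) ℝ) :
    specNorm (M - L) = specNorm (L - M) := by
  rw [specNorm, specNorm, show M - L = -(L - M) by abel, map_neg, norm_neg]

lemma glauber_diff (μ ν : (Fin n → Bool) → ℝ) (h : (Fin n → Bool) → ℝ) (x : Fin n → Bool) :
    glauberOp ν h x - glauberOp μ h x
      = (1/(n:ℝ)) * ∑ i, (condProb ν x i - condProb μ x i) * disc i h x := by
  rw [glauberOp, glauberOp, ← mul_sub, ← Finset.sum_sub_distrib]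
  congr 1
  refine Finset.sum_congr rfl fun i _ => ?_
  rw [disc]; ring

lemma compar (hn : 0 < n) (L M : Matrix (Fin n) (Fin n) ℝ)
    (hLs : L.IsSymm) (hLd : ∀ i, L i i = 0) (hMs : M.IsSymm) (hMd : ∀ i, M i i = 0)
    (h : (Fin n → Bool) → ℝ) :
    |expect (ising M) h - expect (ising M) (glauberOp (ising L) h)|
      ≤ (1/(2*(n:ℝ))) * Real.sqrt n * specNorm (L - M) * eN (Vd h) := by
  have hstat := stationary hn (ising M) (fun y => ising_pos y) h
  have hptwise : ∀ x, |glauberOp (ising M) h x - glauberOp (ising L) h x|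
      ≤ (1/(2*(n:ℝ))) * Real.sqrt n * specNorm (L - M) * eN (Vd h) := by
    intro x
    rw [glauber_diff]
    rw [abs_mul, abs_of_nonneg (by positivity : (0:ℝ) ≤ 1/(n:ℝ))]
    have hterm : ∀ i, |(condProb (ising M) x i - condProb (ising L) x i) * disc i h x|
        ≤ (1/2) * (|(M - L).mulVec (sigmaVec x) i| * Vd h i) := by
      intro i
      rw [abs_mul]
      have h1 := condProb_diff_mat M L hMs hMd hLs hLd x i
      calc |condProb (ising M) x i - condProb (ising L) x i| * |disc i h x|
          ≤ ((1/2) * |(M - L).mulVec (sigmaVec x) i|) * Vd h i :=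
            mul_le_mul h1 (abs_disc_le_Vd h i x) (abs_nonneg _)
              (by positivity)
        _ = (1/2) * (|(M - L).mulVec (sigmaVec x) i| * Vd h i) := by ring
    have hsum : |∑ i, (condProb (ising M) x i - condProb (ising L) x i) * disc i h x|
        ≤ (1/2) * ∑ i, |(M - L).mulVec (sigmaVec x) i| * Vd h i := by
      rw [Finset.mul_sum]
      exact le_trans (Finset.abs_sum_le_sum_abs _ _) (Finset.sum_le_sum fun i _ => hterm i)
    have hcs : ∑ i, |(M - L).mulVec (sigmaVec x) i| * Vd h i
        ≤ eN ((M - L).mulVec (sigmaVec x)) * eN (Vd h) :=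
      cs_abs _ _ (fun i => Vd_nonneg h i)
    have hmv : eN ((M - L).mulVec (sigmaVec x)) ≤ specNorm (L - M) * Real.sqrt n := by
      refine le_trans (eN_mulVec_le (M - L) (sigmaVec x)) ?_
      rw [eN_sigma, specNorm_sub_comm]
    calc (1/(n:ℝ)) * |∑ i, (condProb (ising M) x i - condProb (ising L) x i) * disc i h x|
        ≤ (1/(n:ℝ)) * ((1/2) * (eN ((M - L).mulVec (sigmaVec x)) * eN (Vd h))) := by
          apply mul_le_mul_of_nonneg_left _ (by positivity)
          refine le_trans hsum (mul_le_mul_of_nonneg_left hcs (by norm_num))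
      _ ≤ (1/(n:ℝ)) * ((1/2) * ((specNorm (L - M) * Real.sqrt n) * eN (Vd h))) := by
          apply mul_le_mul_of_nonneg_left _ (by positivity)
          apply mul_le_mul_of_nonneg_left _ (by norm_num)
          exact mul_le_mul_of_nonneg_right hmv (eN_nonneg _)
      _ = (1/(2*(n:ℝ))) * Real.sqrt n * specNorm (L - M) * eN (Vd h) := by ring
  have hμM : ∀ x, 0 < ising M x := fun y => ising_pos y
  have hsum1 : ∑ x, ising M x = 1 := ising_sum M
  calc |expect (ising M) h - expect (ising M) (glauberOp (ising L) h)|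
      = |∑ x, ising M x * (glauberOp (ising M) h x - glauberOp (ising L) h x)| := by
        rw [← hstat]
        show |(∑ x, ising M x * glauberOp (ising M) h x) - ∑ x, ising M x * glauberOp (ising L) h x| = _
        rw [← Finset.sum_sub_distrib]
        congr 1
        exact Finset.sum_congr rfl fun x _ => by ring
    _ ≤ ∑ x, ising M x * |glauberOp (ising M) h x - glauberOp (ising L) h x| := by
        refine le_trans (Finset.abs_sum_le_sum_abs _ _) (Finset.sum_le_sum fun x _ => ?_)
        rw [abs_mul, abs_of_pos (hμM x)]
    _ ≤ ∑ x, ising M x * ((1/(2*(n:ℝ))) * Real.sqrt n * specNorm (L - M) * eN (Vd h)) :=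
        Finset.sum_le_sum fun x _ => mul_le_mul_of_nonneg_left (hptwise x) (hμM x).le
    _ = (1/(2*(n:ℝ))) * Real.sqrt n * specNorm (L - M) * eN (Vd h) := by
        rw [← Finset.sum_mul, hsum1, one_mul]

end main

section assemble
variable {n : ℕ}

lemma expect_abs_le (μ : (Fin n → Bool) → ℝ) (hpos : ∀ x, 0 < μ x) (hsum : ∑ x, μ x = 1)
    (g : (Fin n → Bool) → ℝ) (c B : ℝ) (hB : ∀ x, |g x - c| ≤ B) : |expect μ g - c| ≤ B := by
  have hrw : expect μ g - c = ∑ x, μ x * (g x - c) := by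
    have : ∑ x, μ x * (g x - c) = (∑ x, μ x * g x) - (∑ x, μ x) * c := by
      rw [Finset.sum_mul, ← Finset.sum_sub_distrib]
      exact Finset.sum_congr rfl fun x _ => by ring
    rw [this, hsum, one_mul]; rfl
  rw [hrw]
  calc |∑ x, μ x * (g x - c)| ≤ ∑ x, μ x * |g x - c| := by
        refine le_trans (Finset.abs_sum_le_sum_abs _ _) (Finset.sum_le_sum fun x _ => ?_)
        rw [abs_mul, abs_of_pos (hpos x)]
    _ ≤ ∑ x, μ x * B := Finset.sum_le_sum fun x _ =>
        mul_le_mul_of_nonneg_left (hB x) (hpos x).le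
    _ = B := by rw [← Finset.sum_mul, hsum, one_mul]

theorem stmt6' {n : ℕ} (hn : 0 < n) (L M : Matrix (Fin n) (Fin n) ℝ)
    (hLsymm : L.IsSymm) (hLdiag : ∀ i, L i i = 0)
    (hMsymm : M.IsSymm) (hMdiag : ∀ i, M i i = 0)
    (hDob : specNorm (absMat L) < 1)
    (a : Fin n → ℝ) (ha : ∀ i, 0 < a i)
    (f : (Fin n → Bool) → ℝ)
    (hf : ∀ x y, |f x - f y| ≤ ∑ i, if x i = y i then 0 else a i) :
    |expect (ising L) f - expect (ising M) f|
      ≤ Real.sqrt (∑ i, (a i) ^ 2) * Real.sqrt n / (2 * (1 - specNorm (absMat L)))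
          * specNorm (L - M) := by
  set t := specNorm (absMat L) with ht
  have ht0 : 0 ≤ t := norm_nonneg _
  have hnpos : (0:ℝ) < n := by exact_mod_cast hn
  have hn1 : (1:ℝ) ≤ (n:ℝ) := by exact_mod_cast hn
  set ρ := 1 - (1 - t)/(n:ℝ) with hρ
  have hρ0 : 0 ≤ ρ := by
    rw [hρ]
    have h1 : (1-t)/(n:ℝ) ≤ 1 := by rw [div_le_one hnpos]; linarith
    linarith
  have hρ1 : ρ < 1 := by
    rw [hρ]
    have h1 : 0 < (1-t)/(n:ℝ) := div_pos (by linarith) hnpos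
    linarith
  set P := glauberOp (ising L) with hP
  -- contraction of the Vd seminorm under P
  have contr : ∀ h, eN (Vd (P h)) ≤ ρ * eN (Vd h) := by
    intro h
    have step := Vd_glauber_le hn L hLsymm hLdiag h
    have m1 : eN (Vd (P h))
        ≤ eN (fun i => (1 - 1/(n:ℝ)) * Vd h i + (1/(n:ℝ)) * (absMat L).mulVec (Vd h) i) :=
      eN_mono (fun i => Vd_nonneg _ i) step
    have m2 := eN_comb (1 - 1/(n:ℝ)) (1/(n:ℝ))
      (by rw [sub_nonneg, div_le_one hnpos]; exact hn1) (by positivity)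
      (Vd h) ((absMat L).mulVec (Vd h))
    have m3 : eN ((absMat L).mulVec (Vd h)) ≤ t * eN (Vd h) := eN_mulVec_le _ _
    calc eN (Vd (P h)) ≤ (1 - 1/(n:ℝ)) * eN (Vd h) + (1/(n:ℝ)) * eN ((absMat L).mulVec (Vd h)) :=
          le_trans m1 m2
      _ ≤ (1 - 1/(n:ℝ)) * eN (Vd h) + (1/(n:ℝ)) * (t * eN (Vd h)) := by
          refine add_le_add le_rfl (mul_le_mul_of_nonneg_left m3 (by positivity))
      _ = ρ * eN (Vd h) := by rw [hρ]; field_simp; ring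
  -- initial bound on Vd f
  have hVdf : ∀ i, Vd f i ≤ a i := by
    intro i
    apply Vd_le
    intro x
    refine le_trans (hf (up x i) (dn x i)) (le_of_eq ?_)
    have e1 : ∀ j, (if up x i j = dn x i j then (0:ℝ) else a j) = if j = i then a i else 0 := by
      intro j
      by_cases hj : j = i
      · subst hj; simp [up, dn]
      · simp [up, dn, Function.update_apply, hj]
    rw [Finset.sum_congr rfl fun j _ => e1 j,
      Finset.sum_ite_eq' Finset.univ i (fun _ => a i), if_pos (Finset.mem_univ i)]
  have hVf : eN (Vd f) ≤ eN a := eN_mono (fun i => Vd_nonneg f i) hVdf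
  have hdecay : ∀ k, eN (Vd (P^[k] f)) ≤ ρ^k * eN a := by
    intro k
    induction k with
    | zero => simpa using hVf
    | succ k IH =>
      rw [Function.iterate_succ_apply']
      refine le_trans (contr _) ?_
      calc ρ * eN (Vd (P^[k] f)) ≤ ρ * (ρ^k * eN a) := mul_le_mul_of_nonneg_left IH hρ0
        _ = ρ^(k+1) * eN a := by ring
  have hstatk : ∀ k, expect (ising L) (P^[k] f) = expect (ising L) f := by
    intro k
    induction k with
    | zero => rfl
    | succ k IH =>
      rw [Function.iterate_succ_apply', hP,
        stationary hn (ising L) (fun y => ising_pos y) (P^[k] f)]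
      exact IH
  set C := (1/(2*(n:ℝ))) * Real.sqrt n * specNorm (L - M) with hC
  have hC0 : 0 ≤ C := by
    rw [hC]
    apply mul_nonneg (mul_nonneg (by positivity) (Real.sqrt_nonneg _)) (norm_nonneg _)
  have hstep : ∀ k, |expect (ising M) (P^[k] f) - expect (ising M) (P^[k+1] f)|
      ≤ C * (ρ^k * eN a) := by
    intro k
    rw [Function.iterate_succ_apply', hP]
    refine le_trans (compar hn L M hLsymm hLdiag hMsymm hMdiag (P^[k] f)) ?_
    exact mul_le_mul_of_nonneg_left (hdecay k) hC0
  have hrem : ∀ k, |expect (ising M) (P^[k] f) - expect (ising L) f|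
      ≤ Real.sqrt n * (ρ^k * eN a) := by
    intro k
    apply expect_abs_le (ising M) (fun y => ising_pos y) (ising_sum M)
    intro x
    rw [← hstatk k, abs_sub_comm]
    have h2 : |expect (ising L) (P^[k] f) - P^[k] f x| ≤ ∑ i, Vd (P^[k] f) i := by
      apply expect_abs_le (ising L) (fun y => ising_pos y) (ising_sum L)
      intro y
      exact osc_le (P^[k] f) y x
    refine le_trans h2 ?_
    refine le_trans (sum_le_sqrt_eN _ (Vd_nonneg _)) ?_
    exact mul_le_mul_of_nonneg_left (hdecay k) (Real.sqrt_nonneg _)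
  have key : ∀ K : ℕ, |expect (ising M) f - expect (ising L) f|
      ≤ C * eN a * (1/(1-ρ)) + Real.sqrt n * (ρ^K * eN a) := by
    intro K
    have tele : expect (ising M) f - expect (ising M) (P^[K] f)
        = ∑ k ∈ Finset.range K,
            (expect (ising M) (P^[k] f) - expect (ising M) (P^[k+1] f)) := by
      rw [Finset.sum_range_sub' (fun k => expect (ising M) (P^[k] f)) K]
      rfl
    have t1 : |expect (ising M) f - expect (ising M) (P^[K] f)|
        ≤ ∑ k ∈ Finset.range K, C * (ρ^k * eN a) := by
      rw [tele]
      exact le_trans (Finset.abs_sum_le_sum_abs _ _) (Finset.sum_le_sum fun k _ => hstep k)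
    have t1' : ∑ k ∈ Finset.range K, C * (ρ^k * eN a) = (C * eN a) * ∑ k ∈ Finset.range K, ρ^k := by
      rw [Finset.mul_sum]
      exact Finset.sum_congr rfl fun k _ => by ring
    have geo : ∑ k ∈ Finset.range K, ρ^k ≤ 1/(1-ρ) := by
      have h1 : (0:ℝ) < 1 - ρ := by linarith
      rw [geom_sum_eq (by linarith : ρ ≠ 1)]
      have e2 : (ρ^K - 1)/(ρ - 1) = (1 - ρ^K)/(1 - ρ) := by
        rw [← neg_div_neg_eq]; ring_nf
      rw [e2, div_le_div_iff₀ h1 h1]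
      have := pow_nonneg hρ0 K
      nlinarith
    have t2 : |expect (ising M) f - expect (ising M) (P^[K] f)| ≤ C * eN a * (1/(1-ρ)) := by
      rw [t1'] at t1
      refine le_trans t1 ?_
      exact mul_le_mul_of_nonneg_left geo (mul_nonneg hC0 (eN_nonneg a))
    calc |expect (ising M) f - expect (ising L) f|
        ≤ |expect (ising M) f - expect (ising M) (P^[K] f)|
          + |expect (ising M) (P^[K] f) - expect (ising L) f| := abs_sub_le _ _ _
      _ ≤ C * eN a * (1/(1-ρ)) + Real.sqrt n * (ρ^K * eN a) := add_le_add t2 (hrem K)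
  have hlim : Filter.Tendsto (fun K : ℕ => ρ^K) Filter.atTop (nhds 0) :=
    tendsto_pow_atTop_nhds_zero_of_lt_one hρ0 hρ1
  have h2 : Filter.Tendsto (fun K : ℕ => Real.sqrt n * (ρ^K * eN a)) Filter.atTop (nhds 0) := by
    have h3 := hlim.const_mul (Real.sqrt (n:ℝ) * eN a)
    rw [mul_zero] at h3
    have he : (fun K : ℕ => Real.sqrt (n:ℝ) * (ρ^K * eN a))
        = fun K : ℕ => (Real.sqrt (n:ℝ) * eN a) * ρ^K := by funext K; ring
    rw [he]
    exact h3
  have h4 : Filter.Tendsto (fun K : ℕ => C * eN a * (1/(1-ρ)) + Real.sqrt n * (ρ^K * eN a))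
      Filter.atTop (nhds (C * eN a * (1/(1-ρ)) + 0)) := tendsto_const_nhds.add h2
  rw [add_zero] at h4
  have final : |expect (ising M) f - expect (ising L) f| ≤ C * eN a * (1/(1-ρ)) :=
    ge_of_tendsto h4 (Filter.Eventually.of_forall key)
  rw [abs_sub_comm]
  refine le_trans final (le_of_eq ?_)
  rw [hC, hρ, eN_eq]
  have h5 : (1:ℝ) - t ≠ 0 := by linarith
  have h6 : (n:ℝ) ≠ 0 := hnpos.ne'
  field_simp
  ring
  field_simp
  ring

end assemble


theorem stmt6 {n : ℕ} (hn : 0 < n) (L M : Matrix (Fin n) (Fin n) ℝ)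
    (hLsymm : L.IsSymm) (hLdiag : ∀ i, L i i = 0)
    (hMsymm : M.IsSymm) (hMdiag : ∀ i, M i i = 0)
    (hDob : specNorm (absMat L) < 1)
    (a : Fin n → ℝ) (ha : ∀ i, 0 < a i)
    (f : (Fin n → Bool) → ℝ)
    (hf : ∀ x y, |f x - f y| ≤ ∑ i, if x i = y i then 0 else a i) :
    |expect (ising L) f - expect (ising M) f|
      ≤ Real.sqrt (∑ i, (a i) ^ 2) * Real.sqrt n / (2 * (1 - specNorm (absMat L)))
          * specNorm (L - M) := by
  exact stmt6' hn L M hLsymm hLdiag hMsymm hMdiag hDob a ha f hf
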